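/- Let w = w[1]⋯w[n] ∈ {0,1,2}^* with k = |w|_2 ≥ 1 occurrences of the symbol 2. Then T_$ ∘ T_{w[n]} ∘ ⋯ ∘ T_{w[1]} applied to the vector |p0,0⟩ + |p1,0⟩ − |p2,0⟩ equals |p3,0⟩ if w^r[k] = 1, and equals |p4,0⟩ otherwise (i.e., if w^r[k] ∈ {0,2}). In particular this exactly decides membership of w in END = { w : |w|_2 ≥ 1 and w^r[|w|_2] = 1 }. -/

import Mathlib

/-- The five affine states `p0, …, p4`. -/
inductive St : Type
  | p0 | p1 | p2 | p3 | p4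
  deriving DecidableEq

/-- The real vector space of finitely supported functions from `St × ℤ` to `ℝ`. -/
abbrev V : Type := (St × ℤ) →₀ ℝ

/-- The basis vector `|p,c⟩`. -/
noncomputable def ket (p : St) (c : ℤ) : V := Finsupp.single (p, c) 1

/-- Action of `T_0` on basis vectors. -/
noncomputable def img0 : St × ℤ → V
  | (.p0, c) => ket .p0 c
  | (.p1, c) => ket .p1 c - (1 / 2 : ℝ) • ket .p3 (c + 1) + (1 / 2 : ℝ) • ket .p4 (c + 1)
  | (.p2, c) => ket .p2 c
  | (.p3, c) => ket .p3 (c + 1)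
  | (.p4, c) => ket .p4 (c + 1)

/-- Action of `T_1` on basis vectors. -/
noncomputable def img1 : St × ℤ → V
  | (.p0, c) => ket .p0 c
  | (.p1, c) => ket .p1 c + (1 / 2 : ℝ) • ket .p3 (c + 1) - (1 / 2 : ℝ) • ket .p4 (c + 1)
  | (.p2, c) => ket .p2 c
  | (.p3, c) => ket .p3 (c + 1)
  | (.p4, c) => ket .p4 (c + 1)

/-- Action of `T_2` on basis vectors. -/
noncomputable def img2 : St × ℤ → V
  | (.p0, c) => ket .p0 c
  | (.p1, c) => ket .p1 (c - 1) - (1 / 2 : ℝ) • ket .p3 c + (1 / 2 : ℝ) • ket .p4 c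
  | (.p2, c) => ket .p2 (c - 1)
  | (.p3, c) => ket .p3 c
  | (.p4, c) => ket .p4 c

/-- Action of the end-marker map `T_$` on basis vectors. -/
noncomputable def imgD : St × ℤ → V
  | (.p0, c) => if c = 0 then (1 / 2 : ℝ) • ket .p3 0 + (1 / 2 : ℝ) • ket .p4 0 else ket .p0 c
  | (.p1, c) => ket .p1 c
  | (.p2, c) => ket .p1 c
  | (.p3, c) => ket .p3 c
  | (.p4, c) => if c = 0 then ket .p4 0 else ket .p3 c

/-- The linear map `T_0`. -/
noncomputable def T0 : V →ₗ[ℝ] V :=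
  Finsupp.lsum ℝ fun pc => LinearMap.toSpanSingleton ℝ V (img0 pc)

/-- The linear map `T_1`. -/
noncomputable def T1 : V →ₗ[ℝ] V :=
  Finsupp.lsum ℝ fun pc => LinearMap.toSpanSingleton ℝ V (img1 pc)

/-- The linear map `T_2`. -/
noncomputable def T2 : V →ₗ[ℝ] V :=
  Finsupp.lsum ℝ fun pc => LinearMap.toSpanSingleton ℝ V (img2 pc)

/-- The end-marker linear map `T_$`. -/
noncomputable def TD : V →ₗ[ℝ] V :=
  Finsupp.lsum ℝ fun pc => LinearMap.toSpanSingleton ℝ V (imgD pc)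

/-- The transition map associated to an input symbol in `{0,1,2}`. -/
noncomputable def Tsym (σ : Fin 3) : V →ₗ[ℝ] V :=
  if σ = 0 then T0 else if σ = 1 then T1 else T2

/-- `run w v = (T_{w[n]} ∘ ⋯ ∘ T_{w[1]}) v`. -/
noncomputable def run (w : List (Fin 3)) (v : V) : V :=
  w.foldl (fun v σ => Tsym σ v) v

/-- The language `END ⊆ {0,1,2}^*`: strings containing at least one symbol `2`
whose reverse has the symbol `1` at (1-based) position `|w|₂` (the number of `2`s in `w`). -/
def LangEND : Set (List (Fin 3)) :=
  {w | 1 ≤ w.count 2 ∧ w.reverse.getD (w.count 2 - 1) 0 = 1}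
lemma T0_ket (p : St) (c : ℤ) : T0 (ket p c) = img0 (p, c) := by
  simp [T0, ket, LinearMap.toSpanSingleton_apply]

lemma T1_ket (p : St) (c : ℤ) : T1 (ket p c) = img1 (p, c) := by
  simp [T1, ket, LinearMap.toSpanSingleton_apply]

lemma T2_ket (p : St) (c : ℤ) : T2 (ket p c) = img2 (p, c) := by
  simp [T2, ket, LinearMap.toSpanSingleton_apply]

lemma TD_ket (p : St) (c : ℤ) : TD (ket p c) = imgD (p, c) := by
  simp [TD, ket, LinearMap.toSpanSingleton_apply]

/-- sign of a symbol -/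
def sgn (σ : Fin 3) : ℝ := if σ = 1 then 1 else -1

/-- closed form of the p3/p4 part -/
noncomputable def Scl (w : List (Fin 3)) : V :=
  ∑ i ∈ Finset.range w.length,
    sgn (w.getD i 0) • ((1 / 2 : ℝ) •
      (ket .p3 ((w.length : ℤ) - i - w.count 2) - ket .p4 ((w.length : ℤ) - i - w.count 2)))

lemma run_closed (w : List (Fin 3)) :
    run w (ket .p0 0 + ket .p1 0 - ket .p2 0) =
      ket .p0 0 + ket .p1 (-(w.count 2 : ℤ)) - ket .p2 (-(w.count 2 : ℤ)) + Scl w := by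
  induction w using List.reverseRecOn with
  | nil => simp [run, Scl]
  | append_singleton w σ ih =>
    have hrun : run (w ++ [σ]) (ket .p0 0 + ket .p1 0 - ket .p2 0)
        = Tsym σ (run w (ket .p0 0 + ket .p1 0 - ket .p2 0)) := by
      simp [run, List.foldl_append]
    rw [hrun, ih]
    set n := w.length with hn
    set k := w.count 2 with hkk
    have h3 : σ = 0 ∨ σ = 1 ∨ σ = 2 := by
      fin_cases σ
      · exact Or.inl rfl
      · exact Or.inr (Or.inl rfl)
      · exact Or.inr (Or.inr rfl)
    rcases h3 with rfl | rfl | rfl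
    · -- σ = 0
      have hT : Tsym 0 = T0 := by simp [Tsym]
      rw [hT]
      have hcount : (w ++ [(0 : Fin 3)]).count 2 = k := by simp [List.count_append, hkk]
      have hlen : (w ++ [(0 : Fin 3)]).length = n + 1 := by simp [hn]
      rw [map_add, map_sub, map_add, T0_ket, T0_ket, T0_ket]
      simp only [Scl, map_sum, img0]
      rw [hcount, hlen, Finset.sum_range_succ]
      have hget : (w ++ [(0 : Fin 3)]).getD n 0 = 0 := by
        rw [List.getD_eq_getElem _ _ (by simp [hn])]
        simp [hn]
      rw [hget]
      have hsum : ∀ i ∈ Finset.range n,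
          T0 (sgn (w.getD i 0) • ((1 / 2 : ℝ) •
            (ket .p3 ((n : ℤ) - i - k) - ket .p4 ((n : ℤ) - i - k)))) =
          sgn ((w ++ [(0 : Fin 3)]).getD i 0) • ((1 / 2 : ℝ) •
            (ket .p3 (((n : ℤ) + 1) - i - k) - ket .p4 (((n : ℤ) + 1) - i - k))) := by
        intro i hi
        rw [Finset.mem_range] at hi
        rw [List.getD_append _ _ _ _ (by omega), map_smul, map_smul, map_sub, T0_ket, T0_ket]
        simp only [img0]
        ring_nf
      rw [Finset.sum_congr rfl hsum]
      push_cast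
      have harg : (n : ℤ) + 1 - n - k = -(k : ℤ) + 1 := by ring
      rw [harg]
      simp only [sgn]
      norm_num
      module
    · -- σ = 1
      have hT : Tsym 1 = T1 := by simp [Tsym]
      rw [hT]
      have hcount : (w ++ [(1 : Fin 3)]).count 2 = k := by simp [List.count_append, hkk]
      have hlen : (w ++ [(1 : Fin 3)]).length = n + 1 := by simp [hn]
      rw [map_add, map_sub, map_add, T1_ket, T1_ket, T1_ket]
      simp only [Scl, map_sum, img1]
      rw [hcount, hlen, Finset.sum_range_succ]
      have hget : (w ++ [(1 : Fin 3)]).getD n 0 = 1 := by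
        rw [List.getD_eq_getElem _ _ (by simp [hn])]
        simp [hn]
      rw [hget]
      have hsum : ∀ i ∈ Finset.range n,
          T1 (sgn (w.getD i 0) • ((1 / 2 : ℝ) •
            (ket .p3 ((n : ℤ) - i - k) - ket .p4 ((n : ℤ) - i - k)))) =
          sgn ((w ++ [(1 : Fin 3)]).getD i 0) • ((1 / 2 : ℝ) •
            (ket .p3 (((n : ℤ) + 1) - i - k) - ket .p4 (((n : ℤ) + 1) - i - k))) := by
        intro i hi
        rw [Finset.mem_range] at hi
        rw [List.getD_append _ _ _ _ (by omega), map_smul, map_smul, map_sub, T1_ket, T1_ket]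
        simp only [img1]
        ring_nf
      rw [Finset.sum_congr rfl hsum]
      push_cast
      have harg : (n : ℤ) + 1 - n - k = -(k : ℤ) + 1 := by ring
      rw [harg]
      simp only [sgn]
      norm_num
      module
    · -- σ = 2
      have hT : Tsym 2 = T2 := by simp [Tsym]
      rw [hT]
      have hcount : (w ++ [(2 : Fin 3)]).count 2 = k + 1 := by simp [List.count_append, hkk]
      have hlen : (w ++ [(2 : Fin 3)]).length = n + 1 := by simp [hn]
      rw [map_add, map_sub, map_add, T2_ket, T2_ket, T2_ket]
      simp only [Scl, map_sum, img2]
      rw [hcount, hlen, Finset.sum_range_succ]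
      have hget : (w ++ [(2 : Fin 3)]).getD n 0 = 2 := by
        rw [List.getD_eq_getElem _ _ (by simp [hn])]
        simp [hn]
      rw [hget]
      have hsum : ∀ i ∈ Finset.range n,
          T2 (sgn (w.getD i 0) • ((1 / 2 : ℝ) •
            (ket .p3 ((n : ℤ) - i - k) - ket .p4 ((n : ℤ) - i - k)))) =
          sgn ((w ++ [(2 : Fin 3)]).getD i 0) • ((1 / 2 : ℝ) •
            (ket .p3 (((n : ℤ) + 1) - i - (k + 1)) - ket .p4 (((n : ℤ) + 1) - i - (k + 1)))) := by
        intro i hi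
        rw [Finset.mem_range] at hi
        rw [List.getD_append _ _ _ _ (by omega), map_smul, map_smul, map_sub, T2_ket, T2_ket]
        simp only [img2]
        ring_nf
      rw [Finset.sum_congr rfl hsum]
      push_cast
      have harg : (n : ℤ) + 1 - n - (k + 1) = -(k : ℤ) := by ring
      have harg2 : -((k : ℤ) + 1) = -(k : ℤ) - 1 := by ring
      rw [harg, harg2]
      simp only [sgn]
      norm_num
      rw [if_neg (by decide : ¬(2 : Fin 3) = 1)]
      module

lemma ket_p4_ne_p3 : ket .p4 0 ≠ ket .p3 0 := by
  intro h
  have := DFunLike.congr_fun h (St.p4, 0)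
  simp [ket, Finsupp.single_apply] at this

theorem stmt_13 (w : List (Fin 3)) (hk : 1 ≤ w.count 2) :
    (TD (run w (ket .p0 0 + ket .p1 0 - ket .p2 0)) =
      if w.reverse.getD (w.count 2 - 1) 0 = 1 then ket .p3 0 else ket .p4 0) ∧
    (TD (run w (ket .p0 0 + ket .p1 0 - ket .p2 0)) = ket .p3 0 ↔ w ∈ LangEND) := by
  have hkn : w.count 2 ≤ w.length := List.count_le_length
  set n := w.length with hn
  set k := w.count 2 with hkk
  have hrev : w.reverse.getD (k - 1) 0 = w.getD (n - k) 0 := by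
    rw [List.getD_eq_getElem _ _ (by simp [hn]; omega),
        List.getD_eq_getElem _ _ (by omega)]
    rw [List.getElem_reverse]
    congr 1
    omega
  have hmain : TD (run w (ket .p0 0 + ket .p1 0 - ket .p2 0)) =
      (1 / 2 : ℝ) • ket .p3 0 + (1 / 2 : ℝ) • ket .p4 0 +
        sgn (w.getD (n - k) 0) • ((1 / 2 : ℝ) • (ket .p3 0 - ket .p4 0)) := by
    rw [run_closed]
    rw [map_add, map_sub, map_add, TD_ket, TD_ket, TD_ket]
    simp only [Scl, map_sum, imgD, if_pos rfl, if_true, eq_self_iff_true]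
    rw [← hn, ← hkk]
    have hsum : ∑ i ∈ Finset.range n,
        TD (sgn (w.getD i 0) • ((1 / 2 : ℝ) •
          (ket .p3 ((n : ℤ) - i - k) - ket .p4 ((n : ℤ) - i - k)))) =
        sgn (w.getD (n - k) 0) • ((1 / 2 : ℝ) • (ket .p3 0 - ket .p4 0)) := by
      rw [Finset.sum_eq_single_of_mem (n - k) (by rw [Finset.mem_range]; omega)]
      · have hc : ((n : ℤ) - (n - k : ℕ) - k) = 0 := by
          push_cast [Nat.cast_sub hkn]
          ring
        rw [hc, map_smul, map_smul, map_sub, TD_ket, TD_ket]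
        simp only [imgD, if_pos rfl, if_true, eq_self_iff_true]
      · intro j hj hjne
        rw [Finset.mem_range] at hj
        have hc : ((n : ℤ) - j - k) ≠ 0 := by omega
        rw [map_smul, map_smul, map_sub, TD_ket, TD_ket]
        simp only [imgD, if_neg hc]
        simp
    rw [hsum]
    module
  by_cases h1 : w.getD (n - k) 0 = 1
  · have hres : TD (run w (ket .p0 0 + ket .p1 0 - ket .p2 0)) = ket .p3 0 := by
      rw [hmain, h1]
      norm_num [sgn]
      module
    refine ⟨?_, ?_⟩
    · rw [hrev, if_pos h1, hres]
    · rw [hres]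
      simp only [LangEND, Set.mem_setOf_eq, ← hkk, hrev]
      exact iff_of_true trivial ⟨hk, h1⟩
  · have hres : TD (run w (ket .p0 0 + ket .p1 0 - ket .p2 0)) = ket .p4 0 := by
      rw [hmain]
      simp only [sgn, if_neg h1]
      module
    refine ⟨?_, ?_⟩
    · rw [hrev, if_neg h1, hres]
    · rw [hres]
      simp only [LangEND, Set.mem_setOf_eq, ← hkk, hrev]
      exact iff_of_false ket_p4_ne_p3 (fun h => h1 h.2)
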